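/- Let a, b > 0 and k₁, k₂, c ∈ ℝ, let f : ℝ⁴ → ℝ⁴ be the discrete Ziegler map, and set β := -((k₁ + a)/a) and α' := a·b + (a+b)·k₁ + k₂·(k₁ + a). A point p = (x, y, z, ω) ∈ ℝ⁴ satisfies f(f(p)) = p if and only if z = β·x, ω = β·y, a·c·sin x = α'·x, and a·c·sin y = α'·y. -/

import Mathlib

/-- The discrete Ziegler map (with the non-Hamiltonian symmetry Δ = 0),
with real parameters `a b k₁ k₂ c`, acting on `(x, y, z, ω) ∈ ℝ⁴`. -/
noncomputable def zieglerMap (a b k₁ k₂ c : ℝ) : ℝ × ℝ × ℝ × ℝ → ℝ × ℝ × ℝ × ℝ :=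
  fun p =>
    (p.2.1,
     (1 / (a * b)) * (-(a + b) * k₁ * p.1 + a * k₂ * p.2.2.1 + a * c * Real.sin p.1),
     p.2.2.2,
     (1 / (a * b)) * (a * k₁ * p.1 - a * k₂ * p.2.2.1 - a * c * Real.sin p.1))

theorem two_periodic_points_characterization
    (a b k₁ k₂ c : ℝ) (ha : 0 < a) (hb : 0 < b) (x y z ω : ℝ) :
    zieglerMap a b k₁ k₂ c (zieglerMap a b k₁ k₂ c (x, y, z, ω)) = (x, y, z, ω) ↔
      (z = (-((k₁ + a) / a)) * x ∧ ω = (-((k₁ + a) / a)) * y ∧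
        a * c * Real.sin x = (a * b + (a + b) * k₁ + k₂ * (k₁ + a)) * x ∧
        a * c * Real.sin y = (a * b + (a + b) * k₁ + k₂ * (k₁ + a)) * y) := by
  have ha' : a ≠ 0 := ha.ne'
  have hb' : b ≠ 0 := hb.ne'
  simp only [zieglerMap, Prod.mk.injEq]
  constructor
  · rintro ⟨h1, h2, h3, h4⟩
    field_simp at h1 h2 h3 h4
    have hz : z * a = (-a + -k₁) * x := by
      have h : z * a * b = (-a + -k₁) * x * b := by linear_combination -h1 - a * h3
      exact mul_right_cancel₀ hb' h
    have hω : ω * a = (-a + -k₁) * y := by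
      have h : ω * a * b = (-a + -k₁) * y * b := by linear_combination -h2 - a * h4
      exact mul_right_cancel₀ hb' h
    refine ⟨by field_simp; linarith [hz], by field_simp; linarith [hω], ?_, ?_⟩
    · linear_combination h1 - k₂ * hz
    · linear_combination h2 - k₂ * hω
  · rintro ⟨hz, hω, hx, hy⟩
    field_simp at hz hω
    refine ⟨?_, ?_, ?_, ?_⟩ <;> field_simp
    · linear_combination hx + k₂ * hz
    · linear_combination hy + k₂ * hω
    · apply mul_left_cancel₀ ha'
      linear_combination -(hx + (b + k₂) * hz)
    · apply mul_left_cancel₀ ha'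
      linear_combination -(hy + (b + k₂) * hω)
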